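/- Let p be an odd prime, k a positive integer, and H a nilpotent subgroup of GL₂(ℤ/p^kℤ) which contains every matrix M ∈ GL₂(ℤ/p^kℤ) whose reduction modulo p^{k-1} is the identity. Then for every B ∈ H, the reduction of det(B) modulo p is a square in ℤ/pℤ; in particular, the determinant map det : H → (ℤ/p^kℤ)ˣ is not surjective. -/

import Mathlib

open Matrix
open scoped commutatorElement

theorem iter_comm_eq_one {G : Type*} [Group G] (h : Group.IsNilpotent G) (a b : G) :
    ∃ n, (fun x => ⁅b, x⁆)^[n] a = 1 := by
  obtain ⟨n, hn⟩ := nilpotent_iff_lowerCentralSeries.mp h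
  refine ⟨n, ?_⟩
  have key : ∀ m, (fun x => ⁅b, x⁆)^[m] a ∈ (⊤ : Subgroup G).lowerCentralSeries m := by
    intro m
    induction m with
    | zero => simp
    | succ m ih =>
      rw [Function.iterate_succ_apply']
      have h1 : ⁅(fun x => ⁅b, x⁆)^[m] a, b⁆ ∈ (⊤ : Subgroup G).lowerCentralSeries (m+1) := by
        rw [Subgroup.lowerCentralSeries_succ]
        exact Subgroup.commutator_mem_commutator ih (Subgroup.mem_top b)
      have h2 := ((⊤ : Subgroup G).lowerCentralSeries (m+1)).inv_mem h1
      rwa [commutatorElement_inv] at h2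
  have := key n
  rwa [hn, Subgroup.mem_bot] at this

theorem iter_comm_coe {G : Type*} [Group G] {H : Subgroup G} (b : H) (n : ℕ) (a : H) :
    (((fun x => ⁅b, x⁆)^[n] a : H) : G) = (fun x => ⁅(b : G), x⁆)^[n] (a : G) := by
  induction n with
  | zero => rfl
  | succ n ih =>
    rw [Function.iterate_succ_apply', Function.iterate_succ_apply', ← ih]
    simp [commutatorElement_def]

theorem cubic_identity {R : Type*} [CommRing R] (A Z : Matrix (Fin 2) (Fin 2) R) :
    A * (A * (A * Z - Z * A) - (A * Z - Z * A) * A) -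
      (A * (A * Z - Z * A) - (A * Z - Z * A) * A) * A
      = (A.trace ^ 2 - 4 * A.det) • (A * Z - Z * A) := by
  ext i j
  fin_cases i <;> fin_cases j <;>
    simp [Matrix.mul_apply, Fin.sum_univ_two, Matrix.det_fin_two, Matrix.trace_fin_two,
      Matrix.smul_apply] <;> ring

theorem trace_sq_eq_four_det {F : Type*} [Field F] (A A' : Matrix (Fin 2) (Fin 2) F)
    (h1 : A * A' = 1) (h2 : A' * A = 1)
    (hnil : ∀ Z : Matrix (Fin 2) (Fin 2) F, ∃ n, (fun W => A * W * A' - W)^[n] Z = 0) :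
    A.trace ^ 2 = 4 * A.det := by
  set g : Matrix (Fin 2) (Fin 2) F → Matrix (Fin 2) (Fin 2) F := fun W => A * W - W * A with hg
  set δ := A.trace ^ 2 - 4 * A.det with hδ
  by_contra hne
  have hδ0 : δ ≠ 0 := sub_ne_zero.mpr hne
  have hcomm : Commute A A' := h1.trans h2.symm
  have hfg : ∀ n X, (fun W => A * W * A' - W)^[n] X = g^[n] X * A' ^ n := by
    intro n
    induction n with
    | zero => intro X; simp
    | succ n ih =>
      intro X
      rw [Function.iterate_succ_apply', Function.iterate_succ_apply', ih]
      generalize g^[n] X = W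
      show A * (W * A' ^ n) * A' - W * A' ^ n = (A * W - W * A) * A' ^ (n + 1)
      have e1 : A * A' ^ (n + 1) = A' ^ n := by
        rw [pow_succ', ← mul_assoc, h1, one_mul]
      calc A * (W * A' ^ n) * A' - W * A' ^ n
          = A * W * (A' ^ n * A') - W * (A * A' ^ (n+1)) := by
            rw [e1]; rw [mul_assoc, mul_assoc, mul_assoc]
        _ = (A * W - W * A) * A' ^ (n + 1) := by rw [sub_mul, pow_succ, ← mul_assoc, ← mul_assoc]
  have hgnil : ∀ Z, ∃ n, g^[n] Z = 0 := by
    intro Z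
    obtain ⟨n, hn⟩ := hnil Z
    refine ⟨n, ?_⟩
    rw [hfg] at hn
    have hAA : A' ^ n * A ^ n = 1 := by
      rw [← hcomm.symm.mul_pow, h2, one_pow]
    calc g^[n] Z = g^[n] Z * (A' ^ n * A ^ n) := by rw [hAA, mul_one]
      _ = (g^[n] Z * A' ^ n) * A ^ n := by rw [mul_assoc]
      _ = 0 := by rw [hn, zero_mul]
  have hsmul : ∀ (c : F) (W), g (c • W) = c • g W := by
    intro c W
    simp [hg, Matrix.mul_smul, Matrix.smul_mul, smul_sub]
  have hcube : ∀ Z, g (g (g Z)) = δ • g Z := fun Z => cubic_identity A Z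
  have hodd : ∀ m (Z : Matrix (Fin 2) (Fin 2) F), g^[2 * m + 1] Z = δ ^ m • g Z := by
    intro m
    induction m with
    | zero => intro Z; simp
    | succ m ih =>
      intro Z
      have e : 2 * (m + 1) + 1 = 2 + (2 * m + 1) := by ring
      rw [e, Function.iterate_add_apply, ih]
      show g (g (δ ^ m • g Z)) = δ ^ (m + 1) • g Z
      rw [hsmul, hsmul, hcube, smul_smul, ← pow_succ]
  have hg0 : ∀ Z, g Z = 0 := by
    intro Z
    obtain ⟨n, hn⟩ := hgnil Z
    have hfix : g 0 = 0 := by simp [hg]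
    have hmore : g^[2 * n + 1] Z = 0 := by
      have e : (2 * n + 1) = (n + 1) + n := by ring
      rw [e, Function.iterate_add_apply, hn]
      exact Function.iterate_fixed hfix (n + 1)
    rw [hodd] at hmore
    exact (smul_eq_zero.mp hmore).resolve_left (pow_ne_zero n hδ0)
  have e12 := hg0 !![0, 1; 0, 0]
  have e21 := hg0 !![0, 0; 1, 0]
  have h00 : A 0 0 = A 1 1 := by
    have := congrFun (congrFun e12 0) 1
    simpa [hg, Matrix.mul_apply, Fin.sum_univ_two, sub_eq_zero] using this
  have h10 : A 1 0 = 0 := by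
    have := congrFun (congrFun e12 1) 1
    simpa [hg, Matrix.mul_apply, Fin.sum_univ_two, sub_eq_zero] using this
  have h01 : A 0 1 = 0 := by
    have := congrFun (congrFun e21 0) 0
    simpa [hg, Matrix.mul_apply, Fin.sum_univ_two, sub_eq_zero] using this
  apply hne
  rw [Matrix.trace_fin_two, Matrix.det_fin_two, h00, h10, h01]
  ring

theorem k1_not_nilpotent (m : ℕ) [Fact (1 < m)] (h2 : IsUnit (2 : ZMod m))
    (H : Subgroup (GL (Fin 2) (ZMod m))) (hnil : Group.IsNilpotent H)
    (htop : ∀ M, M ∈ H) : False := by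
  have hbpf : (!![1, 0; 0, -1] : Matrix (Fin 2) (Fin 2) (ZMod m)) * !![1, 0; 0, -1] = 1 := by
    ext i j
    fin_cases i <;> fin_cases j <;>
      simp [Matrix.mul_apply, Fin.sum_univ_two, Matrix.one_apply]
  let bmat : GL (Fin 2) (ZMod m) := ⟨!![1, 0; 0, -1], !![1, 0; 0, -1], hbpf, hbpf⟩
  have hupf : ∀ c : ZMod m,
      (!![1, c; 0, 1] : Matrix (Fin 2) (Fin 2) (ZMod m)) * !![1, -c; 0, 1] = 1 := by
    intro c
    ext i j
    fin_cases i <;> fin_cases j <;>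
      simp [Matrix.mul_apply, Fin.sum_univ_two, Matrix.one_apply]
  have hupf' : ∀ c : ZMod m,
      (!![1, -c; 0, 1] : Matrix (Fin 2) (Fin 2) (ZMod m)) * !![1, c; 0, 1] = 1 := by
    intro c
    have := hupf (-c)
    rwa [neg_neg] at this
  let u : ZMod m → GL (Fin 2) (ZMod m) := fun c =>
    ⟨!![1, c; 0, 1], !![1, -c; 0, 1], hupf c, hupf' c⟩
  have hcomm : ∀ c, ⁅bmat, u c⁆ = u (-2 * c) := by
    intro c
    apply Units.ext
    show (!![1, 0; 0, -1] : Matrix (Fin 2) (Fin 2) (ZMod m)) * !![1, c; 0, 1] *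
        !![1, 0; 0, -1] * !![1, -c; 0, 1] = !![1, -2 * c; 0, 1]
    ext i j
    fin_cases i <;> fin_cases j <;>
      simp [Matrix.mul_apply, Fin.sum_univ_two, Matrix.one_apply] <;> ring
  have hiter : ∀ n, (fun x => ⁅bmat, x⁆)^[n] (u 1) = u ((-2) ^ n) := by
    intro n
    induction n with
    | zero => simp [u]
    | succ n ih =>
      rw [Function.iterate_succ_apply', ih, hcomm, pow_succ']
  obtain ⟨n, hn⟩ := iter_comm_eq_one hnil (⟨u 1, htop _⟩ : H) (⟨bmat, htop _⟩ : H)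
  have hval : (((fun x => ⁅(⟨bmat, htop _⟩ : H), x⁆)^[n] ⟨u 1, htop _⟩ : H) : GL (Fin 2) (ZMod m))
      = u ((-2) ^ n) := by
    rw [iter_comm_coe]
    exact hiter n
  rw [hn] at hval
  have hu1 : u ((-2) ^ n) = 1 := by rw [← hval]; rfl
  have : ((-2 : ZMod m)) ^ n = 0 := by
    have := congrArg (fun M : GL (Fin 2) (ZMod m) =>
      (M : Matrix (Fin 2) (Fin 2) (ZMod m)) 0 1) hu1
    simpa [u, Matrix.one_apply] using this
  exact (h2.neg.pow n).ne_zero this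

/-- Let `p` be an odd prime, `k` a positive integer, and `H` a nilpotent subgroup of
`GL₂(ℤ/p^kℤ)` containing every matrix whose reduction modulo `p^(k-1)` is the identity.
Then the determinant of every element of `H` reduces to a square modulo `p`; in particular
`det : H → (ℤ/p^kℤ)ˣ` is not surjective. -/
theorem det_not_surjective_of_nilpotent (p k : ℕ) (hp : p.Prime) (hodd : Odd p) (hk : 0 < k)
    (H : Subgroup (GL (Fin 2) (ZMod (p ^ k))))
    (hnil : Group.IsNilpotent H)
    (hfull : ∀ M : GL (Fin 2) (ZMod (p ^ k)),
      (M : Matrix (Fin 2) (Fin 2) (ZMod (p ^ k))).map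
          (ZMod.castHom (pow_dvd_pow p (Nat.sub_le k 1)) (ZMod (p ^ (k - 1)))) = 1 →
        M ∈ H) :
    (∀ B ∈ H, IsSquare (ZMod.castHom (dvd_pow_self p hk.ne') (ZMod p)
        (Matrix.det (B : Matrix (Fin 2) (Fin 2) (ZMod (p ^ k)))))) ∧
      ¬ Function.Surjective
          (fun B : H => Matrix.GeneralLinearGroup.det (B : GL (Fin 2) (ZMod (p ^ k)))) := by
  haveI : Fact p.Prime := ⟨hp⟩
  have hp2 : p ≠ 2 := by
    rintro rfl
    simp [Nat.odd_iff] at hodd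
  haveI : NeZero (p ^ k) := ⟨pow_ne_zero k hp.pos.ne'⟩
  set φ := ZMod.castHom (dvd_pow_self p hk.ne') (ZMod p) with hφ
  have key : ∀ B ∈ H, IsSquare (φ
      (Matrix.det (B : Matrix (Fin 2) (Fin 2) (ZMod (p ^ k))))) := by
    rcases Nat.lt_or_ge k 2 with hk1 | hk2
    · -- k = 1 : contradiction from non-nilpotence
      exfalso
      have hk1' : k = 1 := by omega
      subst hk1'
      haveI : Fact (1 < p ^ 1) := ⟨by simpa using hp.one_lt⟩
      refine k1_not_nilpotent (p ^ 1) ?_ H hnil ?_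
      · have : Nat.Coprime 2 (p ^ 1) := Nat.Coprime.pow_right 1 (Nat.coprime_two_left.mpr hodd)
        have := (ZMod.isUnit_iff_coprime 2 (p ^ 1)).mpr this
        simpa using this
      · intro M
        apply hfull
        haveI : Subsingleton (ZMod (p ^ (1 - 1))) := by
          have h1 : p ^ (1 - 1) = 1 := by norm_num
          rw [h1]
          infer_instance
        apply Subsingleton.elim
    · -- main case k ≥ 2
      intro B hB
      set R := ZMod (p ^ k) with hR
      set c : R := (p : R) ^ (k - 1) with hc
      have hc2 : c * c = 0 := by
        have h0 : ((p ^ (k - 1) * p ^ (k - 1) : ℕ) : R) = 0 := by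
          rw [ZMod.natCast_eq_zero_iff]
          rw [← pow_add]
          exact pow_dvd_pow p (by omega)
        rw [Nat.cast_mul, Nat.cast_pow] at h0
        rw [hc]
        exact h0
      -- the congruence subgroup elements
      have hz : ∀ X : Matrix (Fin 2) (Fin 2) R, (c • X) * (c • X) = 0 := by
        intro X
        rw [smul_mul_assoc, mul_smul_comm, smul_smul, hc2, zero_smul]
      have hMXpf : ∀ X : Matrix (Fin 2) (Fin 2) R,
          (1 + c • X) * (1 - c • X) = 1 := by
        intro X
        rw [add_mul, one_mul, mul_sub, mul_one, hz, sub_zero]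
        abel
      have hMXpf' : ∀ X : Matrix (Fin 2) (Fin 2) R,
          (1 - c • X) * (1 + c • X) = 1 := by
        intro X
        rw [sub_mul, one_mul, mul_add, mul_one, hz, add_zero]
        abel
      set MX : Matrix (Fin 2) (Fin 2) R → GL (Fin 2) R := fun X =>
        ⟨1 + c • X, 1 - c • X, hMXpf X, hMXpf' X⟩ with hMX
      have hmem : ∀ X, MX X ∈ H := by
        intro X
        apply hfull
        rw [show ((MX X : GL (Fin 2) R) : Matrix (Fin 2) (Fin 2) R) = 1 + c • X from rfl]
        set ψ := ZMod.castHom (pow_dvd_pow p (Nat.sub_le k 1)) (ZMod (p ^ (k - 1))) with hψ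
        have hψc : ψ c = 0 := by
          rw [hc]
          have : ((p ^ (k-1) : ℕ) : R) = (p : R) ^ (k - 1) := by push_cast; rfl
          rw [← this, map_natCast, ZMod.natCast_self]
        ext i j
        have hone : ψ ((1 : Matrix (Fin 2) (Fin 2) R) i j)
            = (1 : Matrix (Fin 2) (Fin 2) (ZMod (p ^ (k - 1)))) i j := by
          by_cases hij : i = j <;> simp [Matrix.one_apply, hij]
        rw [Matrix.map_apply, Matrix.add_apply, Matrix.smul_apply, smul_eq_mul, map_add,
          _root_.map_mul, hψc, zero_mul, add_zero, hone]
      -- commutator formula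
      have hBB : ((B : GL (Fin 2) R) : Matrix (Fin 2) (Fin 2) R) *
          ((B⁻¹ : GL (Fin 2) R) : Matrix (Fin 2) (Fin 2) R) = 1 := B.mul_inv
      set T : Matrix (Fin 2) (Fin 2) R → Matrix (Fin 2) (Fin 2) R := fun X =>
        (B : Matrix (Fin 2) (Fin 2) R) * X * ((B⁻¹ : GL (Fin 2) R) : Matrix (Fin 2) (Fin 2) R)
          - X with hT
      have hcommB : ∀ X, ⁅B, MX X⁆ = MX (T X) := by
        intro X
        apply Units.ext
        show (B : Matrix (Fin 2) (Fin 2) R) * (1 + c • X) *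
            ((B⁻¹ : GL (Fin 2) R) : Matrix (Fin 2) (Fin 2) R) * (1 - c • X) = 1 + c • T X
        set b := (B : Matrix (Fin 2) (Fin 2) R)
        set b' := ((B⁻¹ : GL (Fin 2) R) : Matrix (Fin 2) (Fin 2) R)
        have s1 : b * (1 + c • X) = b + c • (b * X) := by
          rw [mul_add, mul_one, mul_smul_comm]
        have s2 : (b + c • (b * X)) * b' = 1 + c • (b * X * b') := by
          rw [add_mul, hBB, smul_mul_assoc]
        have s4 : (c • (b * X * b')) * (c • X) = 0 := by
          rw [smul_mul_assoc, mul_smul_comm, smul_smul, hc2, zero_smul]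
        calc b * (1 + c • X) * b' * (1 - c • X)
            = (1 + c • (b * X * b')) * (1 - c • X) := by rw [s1, s2]
          _ = 1 - c • X + c • (b * X * b') - (c • (b * X * b')) * (c • X) := by
              rw [add_mul, one_mul, mul_sub, mul_one]; abel
          _ = 1 + c • (b * X * b' - X) := by rw [s4, smul_sub]; abel
      have hiterT : ∀ n X, (fun x => ⁅B, x⁆)^[n] (MX X) = MX (T^[n] X) := by
        intro n
        induction n with
        | zero => intro X; rfl
        | succ n ih =>
          intro X
          rw [Function.iterate_succ_apply', Function.iterate_succ_apply', ih, hcommB]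
      -- group nilpotency gives vanishing
      have hvanish : ∀ X, ∃ n, c • T^[n] X = 0 := by
        intro X
        obtain ⟨n, hn⟩ := iter_comm_eq_one hnil (⟨MX X, hmem X⟩ : H) (⟨B, hB⟩ : H)
        refine ⟨n, ?_⟩
        have h1 : (((fun x => ⁅(⟨B, hB⟩ : H), x⁆)^[n] ⟨MX X, hmem X⟩ : H) : GL (Fin 2) R)
            = MX (T^[n] X) := by
          rw [iter_comm_coe]
          exact hiterT n X
        rw [hn] at h1
        rw [OneMemClass.coe_one] at h1
        have h2 : (1 : Matrix (Fin 2) (Fin 2) R) = 1 + c • T^[n] X := congrArg Units.val h1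
        exact add_eq_left.mp h2.symm
      -- reduce mod p
      set A := φ.mapMatrix (B : Matrix (Fin 2) (Fin 2) R) with hA
      set A' := φ.mapMatrix ((B⁻¹ : GL (Fin 2) R) : Matrix (Fin 2) (Fin 2) R) with hA'
      have hAA' : A * A' = 1 := by rw [hA, hA', ← _root_.map_mul, hBB, _root_.map_one]
      have hA'A : A' * A = 1 := by
        rw [hA, hA', ← _root_.map_mul,
          show ((B⁻¹ : GL (Fin 2) R) : Matrix (Fin 2) (Fin 2) R) *
            (B : Matrix (Fin 2) (Fin 2) R) = 1 from B.inv_mul, _root_.map_one]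
      have hkill : ∀ y : R, c * y = 0 → φ y = 0 := by
        intro y hy
        have hyv : ((y.val : ℕ) : R) = y := ZMod.natCast_zmod_val y
        have hβ : ((p ^ (k - 1) * y.val : ℕ) : R) = 0 := by
          rw [Nat.cast_mul, Nat.cast_pow]
          rw [hyv, ← hc]
          exact hy
        rw [ZMod.natCast_eq_zero_iff] at hβ
        have hk' : p ^ k = p ^ (k - 1) * p := by
          rw [← pow_succ]
          congr 1
          omega
        have hβ' : p ^ (k - 1) * p ∣ p ^ (k - 1) * y.val :=
          dvd_trans (dvd_of_eq hk'.symm) hβ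
        have hdvd : p ∣ y.val := (Nat.mul_dvd_mul_iff_left (pow_pos hp.pos (k - 1))).mp hβ'
        calc φ y = φ ((y.val : ℕ) : R) := by rw [hyv]
          _ = ((y.val : ℕ) : ZMod p) := map_natCast φ y.val
          _ = 0 := by
              rw [ZMod.natCast_eq_zero_iff]
              exact hdvd
      have hmapT : ∀ X, φ.mapMatrix (T X) = A * φ.mapMatrix X * A' - φ.mapMatrix X := by
        intro X
        rw [hT]
        simp only [map_sub, _root_.map_mul, hA, hA']
      have hmapTiter : ∀ n X, φ.mapMatrix (T^[n] X)
          = (fun W => A * W * A' - W)^[n] (φ.mapMatrix X) := by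
        intro n
        induction n with
        | zero => intro X; rfl
        | succ n ih =>
          intro X
          rw [Function.iterate_succ_apply', Function.iterate_succ_apply', ← ih, hmapT]
      have hnilZ : ∀ Z : Matrix (Fin 2) (Fin 2) (ZMod p),
          ∃ n, (fun W => A * W * A' - W)^[n] Z = 0 := by
        intro Z
        set X : Matrix (Fin 2) (Fin 2) R := Z.map (fun z => ((z.val : ℕ) : R)) with hX
        have hφX : φ.mapMatrix X = Z := by
          ext i j
          rw [RingHom.mapMatrix_apply, Matrix.map_apply, hX, Matrix.map_apply, map_natCast]
          exact ZMod.natCast_zmod_val (Z i j)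
        obtain ⟨n, hn⟩ := hvanish X
        refine ⟨n, ?_⟩
        rw [← hφX, ← hmapTiter]
        ext i j
        rw [RingHom.mapMatrix_apply, Matrix.map_apply, Matrix.zero_apply]
        apply hkill
        have := congrFun (congrFun hn i) j
        simpa [Matrix.smul_apply] using this
      have ht := trace_sq_eq_four_det A A' hAA' hA'A hnilZ
      have h2 : (2 : ZMod p) ≠ 0 := by
        intro h
        rw [show (2 : ZMod p) = ((2 : ℕ) : ZMod p) by norm_cast,
          ZMod.natCast_eq_zero_iff] at h
        exact hp2 ((Nat.prime_dvd_prime_iff_eq hp Nat.prime_two).mp h)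
      refine ⟨A.trace * 2⁻¹, ?_⟩
      have hdet : φ (Matrix.det (B : Matrix (Fin 2) (Fin 2) R)) = A.det := by
        rw [hA]
        exact RingHom.map_det φ _
      rw [hdet]
      field_simp
      linear_combination -ht
  refine ⟨key, ?_⟩
  intro hsur
  have hchar : ringChar (ZMod p) ≠ 2 := by
    rw [ZMod.ringChar_zmod_n]
    exact hp2
  obtain ⟨a, ha⟩ := FiniteField.exists_nonsquare hchar
  have ha0 : a ≠ 0 := by
    rintro rfl
    exact ha ⟨0, by simp⟩
  have hu : IsUnit a := Ne.isUnit ha0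
  obtain ⟨v, hv⟩ := ZMod.unitsMap_surjective (dvd_pow_self p hk.ne') hu.unit
  obtain ⟨B, hBv⟩ := hsur v
  apply ha
  have hksq := key B B.2
  have hval : φ (Matrix.det ((B : GL (Fin 2) (ZMod (p ^ k))) : Matrix (Fin 2) (Fin 2)
      (ZMod (p ^ k)))) = a := by
    have h1 : Matrix.GeneralLinearGroup.det ((B : GL (Fin 2) (ZMod (p ^ k)))) = v := hBv
    have h2 : (v : ZMod (p ^ k)) = Matrix.det ((B : GL (Fin 2) (ZMod (p ^ k))) :
        Matrix (Fin 2) (Fin 2) (ZMod (p ^ k))) := by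
      rw [← h1]
      rfl
    have h3 : ((ZMod.unitsMap (dvd_pow_self p hk.ne') v : (ZMod p)ˣ) : ZMod p)
        = φ (v : ZMod (p ^ k)) := by
      rw [ZMod.unitsMap_def, Units.coe_map]
      rfl
    rw [← h2, ← h3, hv, IsUnit.unit_spec]
  rw [hval] at hksq
  exact hksq
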